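/- Let n ≥ 1 and consider the n-qubit kernel Δ^{(n)}_𝐧 = (1/(4π)^n)·⊗_{j=1}^n (𝟙 + 3𝐧_j·σ), where each 𝐧_j ∈ S². For any state of the form ρ = (1−ε)·2^{−n}𝟙 + ε·ρ_1 with ρ_1 a density operator and 0 ≤ ε ≤ 1/(1 + 2^{2n−1}), the quasi-probability function μ_ρ(𝐧) = Tr(ρ·Δ^{(n)}_𝐧) is non-negative for all 𝐧 ∈ (S²)^n. -/

import Mathlib

open Matrix
open scoped ComplexOrder

/-- A density operator: positive semidefinite with unit trace. -/
def IsDensity {n : Type*} [Fintype n] [DecidableEq n] (ρ : Matrix n n ℂ) : Prop :=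
  ρ.PosSemidef ∧ ρ.trace = 1

/-- Pauli X. -/
def pauliX : Matrix (Fin 2) (Fin 2) ℂ := !![0, 1; 1, 0]
/-- Pauli Y. -/
def pauliY : Matrix (Fin 2) (Fin 2) ℂ := !![0, -Complex.I; Complex.I, 0]
/-- Pauli Z. -/
def pauliZ : Matrix (Fin 2) (Fin 2) ℂ := !![1, 0; 0, -1]

/-- `𝐧·σ` for a vector `𝐧 ∈ ℝ³`. -/
noncomputable def dotSigma (v : Fin 3 → ℝ) : Matrix (Fin 2) (Fin 2) ℂ :=
  (v 0 : ℂ) • pauliX + (v 1 : ℂ) • pauliY + (v 2 : ℂ) • pauliZ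

/-- The `n`-fold tensor (Kronecker) product `⊗_{j=1}^n (𝟙 + 3 𝐧_j·σ)`, realized as the
matrix on `(ℂ²)^{⊗n}` whose entries are products of the factors' entries. -/
noncomputable def kernelCore (n : ℕ) (v : Fin n → (Fin 3 → ℝ)) :
    Matrix (Fin n → Fin 2) (Fin n → Fin 2) ℂ :=
  Matrix.of fun i j =>
    ∏ k : Fin n, ((1 : Matrix (Fin 2) (Fin 2) ℂ) + (3 : ℂ) • dotSigma (v k)) (i k) (j k)

/-! ### Auxiliary lemmas -/

lemma dotSigma_herm (v : Fin 3 → ℝ) : (dotSigma v).IsHermitian := by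
  ext i j
  fin_cases i <;> fin_cases j <;>
    simp [dotSigma, pauliX, pauliY, pauliZ, Matrix.conjTranspose_apply, Complex.ext_iff]

lemma dotSigma_sq (v : Fin 3 → ℝ) (hv : v 0 ^ 2 + v 1 ^ 2 + v 2 ^ 2 = 1) :
    dotSigma v * dotSigma v = 1 := by
  have hv' : (v 0 : ℂ) ^ 2 + (v 1 : ℂ) ^ 2 + (v 2 : ℂ) ^ 2 = 1 := by
    exact_mod_cast congrArg (Complex.ofReal ·) hv
  ext i j
  fin_cases i <;> fin_cases j <;>
    · simp [dotSigma, pauliX, pauliY, pauliZ, Matrix.mul_apply, Fin.sum_univ_two,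
        Matrix.one_apply]
      try ring_nf
      try linear_combination hv' - ((v 1:ℝ):ℂ)^2 * Complex.I_sq

noncomputable def Mmat (v : Fin 3 → ℝ) : Matrix (Fin 2) (Fin 2) ℂ :=
  1 + (3 : ℂ) • dotSigma v
noncomputable def Pmat (v : Fin 3 → ℝ) : Matrix (Fin 2) (Fin 2) ℂ :=
  (6 : ℂ)⁻¹ • (Mmat v + (2 : ℂ) • 1)
noncomputable def Qmat (v : Fin 3 → ℝ) : Matrix (Fin 2) (Fin 2) ℂ :=
  (6 : ℂ)⁻¹ • ((4 : ℂ) • 1 - Mmat v)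

lemma Mmat_herm (v : Fin 3 → ℝ) : (Mmat v).IsHermitian := by
  have h := dotSigma_herm v
  rw [Matrix.IsHermitian] at h ⊢
  rw [Mmat, conjTranspose_add, conjTranspose_one, conjTranspose_smul, h]
  norm_num

lemma Mmat_sq (v : Fin 3 → ℝ) (hv : v 0 ^ 2 + v 1 ^ 2 + v 2 ^ 2 = 1) :
    Mmat v * Mmat v = (2 : ℂ) • Mmat v + (8 : ℂ) • 1 := by
  simp only [Mmat, add_mul, mul_add, one_mul, mul_one, smul_mul_assoc, mul_smul_comm,
    dotSigma_sq v hv]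
  module

lemma Pmat_idem (v : Fin 3 → ℝ) (hv : v 0 ^ 2 + v 1 ^ 2 + v 2 ^ 2 = 1) :
    Pmat v * Pmat v = Pmat v := by
  simp only [Pmat, smul_mul_assoc, mul_smul_comm, add_mul, mul_add, one_mul, mul_one,
    Mmat_sq v hv, smul_smul]
  module

lemma Qmat_idem (v : Fin 3 → ℝ) (hv : v 0 ^ 2 + v 1 ^ 2 + v 2 ^ 2 = 1) :
    Qmat v * Qmat v = Qmat v := by
  simp only [Qmat, smul_mul_assoc, mul_smul_comm, sub_mul, mul_sub, one_mul, mul_one,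
    Mmat_sq v hv, smul_smul]
  module

lemma Pmat_herm (v : Fin 3 → ℝ) : (Pmat v).IsHermitian := by
  have h := Mmat_herm v
  rw [Matrix.IsHermitian] at h ⊢
  rw [Pmat, conjTranspose_smul, conjTranspose_add, conjTranspose_smul, conjTranspose_one, h]
  norm_num

lemma Qmat_herm (v : Fin 3 → ℝ) : (Qmat v).IsHermitian := by
  have h := Mmat_herm v
  rw [Matrix.IsHermitian] at h ⊢
  rw [Qmat, conjTranspose_smul, conjTranspose_sub, conjTranspose_smul, conjTranspose_one, h]
  norm_num

lemma Pmat_psd (v : Fin 3 → ℝ) (hv : v 0 ^ 2 + v 1 ^ 2 + v 2 ^ 2 = 1) :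
    (Pmat v).PosSemidef := by
  have h : Pmat v = (Pmat v)ᴴ * Pmat v := by rw [Pmat_herm v, Pmat_idem v hv]
  rw [h]; exact Matrix.posSemidef_conjTranspose_mul_self _

lemma Qmat_psd (v : Fin 3 → ℝ) (hv : v 0 ^ 2 + v 1 ^ 2 + v 2 ^ 2 = 1) :
    (Qmat v).PosSemidef := by
  have h : Qmat v = (Qmat v)ᴴ * Qmat v := by rw [Qmat_herm v, Qmat_idem v hv]
  rw [h]; exact Matrix.posSemidef_conjTranspose_mul_self _

lemma Mmat_decomp (v : Fin 3 → ℝ) : (4 : ℂ) • Pmat v + (-2 : ℂ) • Qmat v = Mmat v := by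
  rw [Pmat, Qmat]; module

lemma PQ_sum (v : Fin 3 → ℝ) : Pmat v + Qmat v = 1 := by
  rw [Pmat, Qmat]; module

lemma Mmat_trace (v : Fin 3 → ℝ) : (Mmat v).trace = 2 := by
  simp [Mmat, dotSigma, pauliX, pauliY, pauliZ, Matrix.trace, Matrix.diag, Fin.sum_univ_two]
  ring

set_option linter.unusedSectionVars false

section helpers
variable {m : Type*} [Fintype m] [DecidableEq m]

open MatrixOrder in
lemma psd_eq_conjTranspose_mul_self {A : Matrix m m ℂ} (hA : A.PosSemidef) :
    ∃ B : Matrix m m ℂ, A = Bᴴ * B := by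
  have h0 : 0 ≤ A := hA.nonneg
  refine ⟨CFC.sqrt A, ?_⟩
  have hs : star (CFC.sqrt A) = CFC.sqrt A := (IsSelfAdjoint.of_nonneg (CFC.sqrt_nonneg A)).star_eq
  change A = star (CFC.sqrt A) * CFC.sqrt A
  rw [hs, CFC.sqrt_mul_sqrt_self A h0]

lemma psd_smul_real {A : Matrix m m ℂ} (hA : A.PosSemidef) {c : ℝ} (hc : 0 ≤ c) :
    (((c : ℂ)) • A).PosSemidef := by
  refine Matrix.PosSemidef.of_dotProduct_mulVec_nonneg ?_ ?_
  · have h1 := hA.1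
    rw [Matrix.IsHermitian, conjTranspose_smul, h1]
    congr 1
    exact Complex.conj_ofReal c
  · intro x
    rw [smul_mulVec, dotProduct_smul, smul_eq_mul]
    exact mul_nonneg (by exact_mod_cast hc) (hA.dotProduct_mulVec_nonneg x)

lemma psd_trace_nonneg {A : Matrix m m ℂ} (hA : A.PosSemidef) : 0 ≤ A.trace :=
  Finset.sum_nonneg fun i _ => by
    have := hA.dotProduct_mulVec_nonneg (Pi.single i 1)
    simpa [Matrix.mulVec_single, dotProduct, Pi.single_apply] using this

lemma psd_trace_mul_nonneg {A B : Matrix m m ℂ} (hA : A.PosSemidef) (hB : B.PosSemidef) :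
    0 ≤ (A * B).trace := by
  obtain ⟨C, rfl⟩ := psd_eq_conjTranspose_mul_self hA
  rw [Matrix.mul_assoc, Matrix.trace_mul_comm]
  exact psd_trace_nonneg (hB.mul_mul_conjTranspose_same C)

end helpers

lemma piTensor_posSemidef {n : ℕ} (A : Fin n → Matrix (Fin 2) (Fin 2) ℂ)
    (hA : ∀ k, (A k).PosSemidef) :
    (Matrix.of fun i j : Fin n → Fin 2 => ∏ k, A k (i k) (j k)).PosSemidef := by
  choose B hB using fun k => psd_eq_conjTranspose_mul_self (hA k)
  have key : (Matrix.of fun i j : Fin n → Fin 2 => ∏ k, A k (i k) (j k))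
      = (Matrix.of fun m i : Fin n → Fin 2 => ∏ k, B k (m k) (i k))ᴴ
        * (Matrix.of fun m i : Fin n → Fin 2 => ∏ k, B k (m k) (i k)) := by
    ext i j
    rw [Matrix.mul_apply]
    simp only [Matrix.conjTranspose_apply, Matrix.of_apply]
    calc ∏ k, A k (i k) (j k)
        = ∏ k, ∑ a : Fin 2, star (B k a (i k)) * B k a (j k) := by
          refine Finset.prod_congr rfl fun k _ => ?_
          rw [hB k, Matrix.mul_apply]
          simp [Matrix.conjTranspose_apply]
      _ = ∑ m : Fin n → Fin 2, ∏ k, star (B k (m k) (i k)) * B k (m k) (j k) :=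
          Fintype.prod_sum _
      _ = ∑ m : Fin n → Fin 2, star (∏ k, B k (m k) (i k)) * ∏ k, B k (m k) (j k) := by
          refine Finset.sum_congr rfl fun m _ => ?_
          rw [star_prod, Finset.prod_mul_distrib]
  rw [key]
  exact Matrix.posSemidef_conjTranspose_mul_self _

lemma ite_prod_split {n : ℕ} (t : Finset (Fin n)) (f g : Fin n → ℂ) :
    ∏ k, (if k ∈ t then f k else g k) = (∏ k ∈ t, f k) * ∏ k ∈ tᶜ, g k := by
  rw [Finset.prod_ite, Finset.filter_mem_eq_inter, Finset.univ_inter, Finset.filter_not,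
    Finset.filter_mem_eq_inter, Finset.univ_inter, ← Finset.compl_eq_univ_sdiff]

lemma kernel_expand (n : ℕ) (v : Fin n → (Fin 3 → ℝ)) :
    kernelCore n v = ∑ t : Finset (Fin n),
      ((4 : ℂ) ^ t.card * (-2 : ℂ) ^ (n - t.card)) •
        Matrix.of (fun i j : Fin n → Fin 2 =>
          ∏ k, (if k ∈ t then Pmat (v k) else Qmat (v k)) (i k) (j k)) := by
  ext i j
  simp only [kernelCore, Matrix.of_apply, Matrix.sum_apply, Matrix.smul_apply, smul_eq_mul]
  calc (∏ k, ((1 : Matrix (Fin 2) (Fin 2) ℂ) + (3 : ℂ) • dotSigma (v k)) (i k) (j k))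
      = ∏ k, ((4 : ℂ) * Pmat (v k) (i k) (j k) + (-2 : ℂ) * Qmat (v k) (i k) (j k)) := by
        refine Finset.prod_congr rfl fun k _ => ?_
        have h2 : ((1 : Matrix (Fin 2) (Fin 2) ℂ) + (3 : ℂ) • dotSigma (v k)) (i k) (j k)
            = ((4 : ℂ) • Pmat (v k) + (-2 : ℂ) • Qmat (v k)) (i k) (j k) := by
          rw [Mmat_decomp (v k)]; rfl
        rw [h2, Matrix.add_apply, Matrix.smul_apply, Matrix.smul_apply, smul_eq_mul, smul_eq_mul]
    _ = ∑ t : Finset (Fin n), (∏ k ∈ t, (4 : ℂ) * Pmat (v k) (i k) (j k)) *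
          ∏ k ∈ tᶜ, (-2 : ℂ) * Qmat (v k) (i k) (j k) := Fintype.prod_add _ _
    _ = ∑ t : Finset (Fin n), (4 : ℂ) ^ t.card * (-2 : ℂ) ^ (n - t.card) *
          ∏ k, (if k ∈ t then Pmat (v k) else Qmat (v k)) (i k) (j k) := by
        refine Finset.sum_congr rfl fun t _ => ?_
        have hsplit : ∏ k, (if k ∈ t then Pmat (v k) else Qmat (v k)) (i k) (j k)
            = (∏ k ∈ t, Pmat (v k) (i k) (j k)) * ∏ k ∈ tᶜ, Qmat (v k) (i k) (j k) := by
          rw [← ite_prod_split t (fun k => Pmat (v k) (i k) (j k))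
            (fun k => Qmat (v k) (i k) (j k))]
          exact Finset.prod_congr rfl fun k _ => by split <;> rfl
        rw [hsplit, Finset.prod_mul_distrib, Finset.prod_mul_distrib, Finset.prod_const,
          Finset.prod_const, Finset.card_compl, Fintype.card_fin]
        ring

lemma one_expand (n : ℕ) (v : Fin n → (Fin 3 → ℝ)) :
    (1 : Matrix (Fin n → Fin 2) (Fin n → Fin 2) ℂ) = ∑ t : Finset (Fin n),
        Matrix.of (fun i j : Fin n → Fin 2 =>
          ∏ k, (if k ∈ t then Pmat (v k) else Qmat (v k)) (i k) (j k)) := by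
  ext i j
  have h1 : (1 : Matrix (Fin n → Fin 2) (Fin n → Fin 2) ℂ) i j
      = ∏ k, (1 : Matrix (Fin 2) (Fin 2) ℂ) (i k) (j k) := by
    by_cases h : i = j
    · subst h; simp [Matrix.one_apply]
    · obtain ⟨k, hk⟩ := Function.ne_iff.mp h
      rw [Matrix.one_apply_ne h, eq_comm]
      exact Finset.prod_eq_zero (Finset.mem_univ k) (Matrix.one_apply_ne hk)
  rw [h1]
  simp only [Matrix.sum_apply, Matrix.of_apply]
  calc (∏ k, (1 : Matrix (Fin 2) (Fin 2) ℂ) (i k) (j k))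
      = ∏ k, (Pmat (v k) (i k) (j k) + Qmat (v k) (i k) (j k)) := by
        refine Finset.prod_congr rfl fun k _ => ?_
        rw [← PQ_sum (v k), Matrix.add_apply]
    _ = ∑ t : Finset (Fin n), (∏ k ∈ t, Pmat (v k) (i k) (j k)) *
          ∏ k ∈ tᶜ, Qmat (v k) (i k) (j k) := Fintype.prod_add _ _
    _ = ∑ t : Finset (Fin n), ∏ k, (if k ∈ t then Pmat (v k) else Qmat (v k)) (i k) (j k) := by
        refine Finset.sum_congr rfl fun t _ => ?_
        rw [← ite_prod_split t (fun k => Pmat (v k) (i k) (j k))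
          (fun k => Qmat (v k) (i k) (j k))]
        exact (Finset.prod_congr rfl fun k _ => by split <;> rfl).symm

lemma coeff_nonneg (n : ℕ) (hn : 1 ≤ n) (a : ℕ) (ha : a ≤ n) :
    0 ≤ (4 : ℝ) ^ a * (-2 : ℝ) ^ (n - a) + (2 : ℝ) ^ (2 * n - 1) := by
  rcases eq_or_lt_of_le ha with h | h
  · subst h
    simp only [Nat.sub_self, pow_zero, mul_one]
    positivity
  · have h1 : -((4 : ℝ) ^ a * 2 ^ (n - a)) ≤ (4 : ℝ) ^ a * (-2 : ℝ) ^ (n - a) := by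
      have habs : -((2:ℝ) ^ (n-a)) ≤ (-2 : ℝ) ^ (n - a) := by
        have := neg_abs_le ((-2 : ℝ) ^ (n - a))
        rwa [abs_pow, abs_neg, abs_two] at this
      have := mul_le_mul_of_nonneg_left habs (by positivity : (0:ℝ) ≤ (4:ℝ)^a)
      rwa [mul_neg] at this
    have h2 : (4 : ℝ) ^ a * 2 ^ (n - a) = 2 ^ (n + a) := by
      have : (4 : ℝ) = 2 ^ 2 := by norm_num
      rw [this, ← pow_mul, ← pow_add]
      congr 1
      omega
    have h3 : (2 : ℝ) ^ (n + a) ≤ 2 ^ (2 * n - 1) :=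
      pow_le_pow_right₀ one_le_two (by omega)
    linarith
set_option maxHeartbeats 1000000 in
/-- For `n ≥ 1` qubits, a state `ρ = (1−ε) 2^{−n} 𝟙 + ε ρ₁` with
`0 ≤ ε ≤ 1/(1 + 2^{2n−1})` has non-negative spherical quasi-probability function
`μ_ρ(𝐧) = Tr(ρ Δ^{(n)}_𝐧)`, where `Δ^{(n)}_𝐧 = (1/(4π)^n) ⊗_j (𝟙 + 3𝐧_j·σ)`. -/
theorem nmr_state_nonneg_wigner (n : ℕ) (hn : 1 ≤ n)
    (v : Fin n → (Fin 3 → ℝ)) (hv : ∀ k, (v k 0) ^ 2 + (v k 1) ^ 2 + (v k 2) ^ 2 = 1)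
    (ρ₁ : Matrix (Fin n → Fin 2) (Fin n → Fin 2) ℂ) (hρ₁ : IsDensity ρ₁)
    (ε : ℝ) (hε0 : 0 ≤ ε) (hε1 : ε ≤ 1 / (1 + 2 ^ (2 * n - 1)))
    (ρ : Matrix (Fin n → Fin 2) (Fin n → Fin 2) ℂ)
    (hρ : ρ = (((1 - ε : ℝ)) : ℂ) • (((2 : ℂ) ^ n)⁻¹ • 1) + ((ε : ℝ) : ℂ) • ρ₁) :
    0 ≤ ((ρ * ((((4 * Real.pi : ℝ) ^ n : ℝ) : ℂ)⁻¹ • kernelCore n v)).trace).re := by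
  set c : ℝ := (2 : ℝ) ^ (2 * n - 1) with hc
  -- each projector-tensor term is PSD
  have hTt : ∀ t : Finset (Fin n), (Matrix.of (fun i j : Fin n → Fin 2 =>
      ∏ k, (if k ∈ t then Pmat (v k) else Qmat (v k)) (i k) (j k))).PosSemidef := by
    intro t
    apply piTensor_posSemidef
    intro k
    by_cases hk : k ∈ t
    · rw [if_pos hk]; exact Pmat_psd (v k) (hv k)
    · rw [if_neg hk]; exact Qmat_psd (v k) (hv k)
  -- expansion of the shifted kernel
  have hexp : kernelCore n v + ((c : ℂ)) • 1 = ∑ t : Finset (Fin n),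
      ((((4 : ℝ) ^ t.card * (-2 : ℝ) ^ (n - t.card) + c : ℝ)) : ℂ) •
      Matrix.of (fun i j : Fin n → Fin 2 =>
          ∏ k, (if k ∈ t then Pmat (v k) else Qmat (v k)) (i k) (j k)) := by
    rw [kernel_expand n v]
    rw [one_expand n v]
    rw [Finset.smul_sum, ← Finset.sum_add_distrib]
    refine Finset.sum_congr rfl fun t _ => ?_
    rw [← add_smul]
    congr 1
    push_cast
    ring
  have hpsd : (kernelCore n v + ((c : ℂ)) • 1).PosSemidef := by
    rw [hexp]
    refine Finset.sum_induction _ _ (fun a b ha hb => ha.add hb) Matrix.PosSemidef.zero ?_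
    intro t _
    exact psd_smul_real (hTt t)
      (coeff_nonneg n hn t.card (by simpa using Finset.card_le_univ t))
  -- trace bound for ρ₁
  have htr0 : 0 ≤ (ρ₁ * (kernelCore n v + (c : ℂ) • 1)).trace :=
    psd_trace_mul_nonneg hρ₁.1 hpsd
  have htr1 : (ρ₁ * (kernelCore n v + (c : ℂ) • 1)).trace
      = (ρ₁ * kernelCore n v).trace + (c : ℂ) := by
    rw [Matrix.mul_add, Matrix.trace_add, Matrix.mul_smul, Matrix.mul_one, Matrix.trace_smul,
      hρ₁.2, smul_eq_mul, mul_one]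
  have hTre : -c ≤ ((ρ₁ * kernelCore n v).trace).re := by
    rw [htr1] at htr0
    have h := (Complex.le_def.mp htr0).1
    simp only [Complex.zero_re, Complex.add_re, Complex.ofReal_re] at h
    linarith
  -- trace of the kernel
  have hKtr : (kernelCore n v).trace = (2 : ℂ) ^ n := by
    rw [Matrix.trace]
    calc ∑ i : Fin n → Fin 2, (kernelCore n v).diag i
        = ∑ i : Fin n → Fin 2, ∏ k, Mmat (v k) (i k) (i k) := by
          refine Finset.sum_congr rfl fun i _ => ?_
          simp only [kernelCore, Matrix.diag, Matrix.of_apply, Mmat]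
      _ = ∏ k, ∑ a : Fin 2, Mmat (v k) a a := (Fintype.prod_sum (fun k (a : Fin 2) => Mmat (v k) a a)).symm
      _ = ∏ _k : Fin n, (2 : ℂ) := by
          refine Finset.prod_congr rfl fun k _ => ?_
          have h := Mmat_trace (v k)
          rw [Matrix.trace] at h
          simpa [Matrix.diag] using h
      _ = (2 : ℂ) ^ n := by simp
  -- main trace computation
  have hmain : (ρ * ((((4 * Real.pi : ℝ) ^ n : ℝ) : ℂ)⁻¹ • kernelCore n v)).trace
      = (((4 * Real.pi : ℝ) ^ n : ℝ) : ℂ)⁻¹ *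
        ((((1 - ε : ℝ)) : ℂ) + ((ε : ℝ) : ℂ) * (ρ₁ * kernelCore n v).trace) := by
    rw [hρ, Matrix.mul_smul, Matrix.trace_smul, smul_eq_mul]
    congr 1
    simp only [Matrix.add_mul, smul_mul_assoc, Matrix.one_mul, Matrix.trace_add,
      Matrix.trace_smul, smul_eq_mul]
    rw [hKtr, inv_mul_cancel₀ (pow_ne_zero n two_ne_zero), mul_one]
  rw [hmain, ← Complex.ofReal_inv]
  rw [Complex.re_ofReal_mul, Complex.add_re, Complex.ofReal_re, Complex.re_ofReal_mul]
  have hrpos : (0 : ℝ) ≤ (((4 * Real.pi) ^ n : ℝ))⁻¹ := by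
    have := Real.pi_pos
    positivity
  apply mul_nonneg hrpos
  have hd : (0 : ℝ) < 1 + 2 ^ (2 * n - 1) := by positivity
  have hεc : ε + ε * c ≤ 1 := by
    have h := (le_div_iff₀ hd).mp hε1
    calc ε + ε * c = ε * (1 + c) := by ring
      _ ≤ 1 := by rw [hc]; linarith [h]
  have h4 : -(ε * c) ≤ ε * ((ρ₁ * kernelCore n v).trace).re := by
    have h5 := mul_le_mul_of_nonneg_left hTre hε0
    rwa [mul_neg] at h5
  linarith
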